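/- arXiv:2101.09803 — 4 statements merged into one kernel-verified Lean document; each statement's English description precedes it below -/
import Mathlib

section
/- Let S be a commutative Noetherian ring, I₁ and I₂ transversal ideals of S (i.e., I₁ ∩ I₂ = I₁I₂), and z ∈ S an element that is a nonzerodivisor modulo I = I₁ + I₂. Then the images of I₁ and I₂ in S' = S/(z) are still transversal, and moreover (I₁, z) ∩ (I₂, z) = (I₁ ∩ I₂, z). -/
/-- If `I₁, I₂` are transversal ideals of a commutative Noetherian ring `S` and `z` is a
nonzerodivisor modulo `I = I₁ + I₂`, then the images of `I₁` and `I₂` in `S/(z)` are still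
transversal, and `(I₁, z) ∩ (I₂, z) = (I₁ ∩ I₂, z)`. -/
theorem transversal_mod_regular_element
    {S : Type} [CommRing S] [IsNoetherianRing S] (I₁ I₂ : Ideal S) (z : S)
    (htrans : I₁ ⊓ I₂ = I₁ * I₂)
    (hreg : ∀ f : S, z * f ∈ I₁ + I₂ → f ∈ I₁ + I₂) :
    (Ideal.map (Ideal.Quotient.mk (Ideal.span {z})) I₁ ⊓
        Ideal.map (Ideal.Quotient.mk (Ideal.span {z})) I₂ =
      Ideal.map (Ideal.Quotient.mk (Ideal.span {z})) I₁ *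
        Ideal.map (Ideal.Quotient.mk (Ideal.span {z})) I₂) ∧
    (I₁ + Ideal.span {z}) ⊓ (I₂ + Ideal.span {z}) = (I₁ ⊓ I₂) + Ideal.span {z} := by
  set J : Ideal S := Ideal.span {z} with hJ
  have key : (I₁ + J) ⊓ (I₂ + J) = (I₁ ⊓ I₂) + J := by
    apply le_antisymm
    · intro x hx
      obtain ⟨hx1, hx2⟩ := hx
      simp only [SetLike.mem_coe, Submodule.add_eq_sup, Submodule.mem_sup] at hx1 hx2
      obtain ⟨a₁, ha₁, b₁, hb₁, h1⟩ := hx1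
      obtain ⟨a₂, ha₂, b₂, hb₂, h2⟩ := hx2
      rw [hJ, Ideal.mem_span_singleton'] at hb₁ hb₂
      obtain ⟨s, hs⟩ := hb₁
      obtain ⟨t, ht⟩ := hb₂
      have hzst : z * (s - t) ∈ I₁ + I₂ := by
        have heq : z * (s - t) = a₂ - a₁ := by linear_combination hs - ht + h1 - h2
        rw [Submodule.add_eq_sup, heq]
        exact sub_mem (Submodule.mem_sup_right ha₂) (Submodule.mem_sup_left ha₁)
      have hst := hreg _ hzst
      rw [Submodule.add_eq_sup, Submodule.mem_sup] at hst
      obtain ⟨u₁, hu₁, u₂, hu₂, hu⟩ := hst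
      rw [Submodule.add_eq_sup, Submodule.mem_sup]
      refine ⟨a₁ + u₁ * z, ⟨?_, ?_⟩, (t + u₂) * z, ?_, ?_⟩
      · exact add_mem ha₁ (Ideal.mul_mem_right _ _ hu₁)
      · have : a₁ + u₁ * z = a₂ - u₂ * z := by
          linear_combination h1 - h2 + hs - ht + z * hu
        rw [this]
        exact sub_mem ha₂ (Ideal.mul_mem_right _ _ hu₂)
      · exact Ideal.mem_span_singleton'.2 ⟨t + u₂, rfl⟩
      · linear_combination h1 + hs + z * hu
    · exact le_inf (sup_le_sup_right inf_le_left _) (sup_le_sup_right inf_le_right _)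
  refine ⟨?_, key⟩
  have hsurj : Function.Surjective (Ideal.Quotient.mk J) := Ideal.Quotient.mk_surjective
  have hcomap : ∀ K : Ideal S,
      Ideal.comap (Ideal.Quotient.mk J) (Ideal.map (Ideal.Quotient.mk J) K) = K ⊔ J := by
    intro K
    rw [Ideal.comap_map_of_surjective _ hsurj, ← RingHom.ker_eq_comap_bot, Ideal.mk_ker]
  have hmc := Ideal.map_comap_of_surjective _ hsurj
      (Ideal.map (Ideal.Quotient.mk J) I₁ ⊓ Ideal.map (Ideal.Quotient.mk J) I₂)
  rw [Ideal.comap_inf, hcomap, hcomap] at hmc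
  have : (I₁ ⊔ J) ⊓ (I₂ ⊔ J) = (I₁ ⊓ I₂) ⊔ J := key
  rw [this, Ideal.map_sup, Ideal.map_quotient_self, sup_bot_eq, htrans, Ideal.map_mul] at hmc
  exact hmc.symm
end

section
/- Let S = k[x, y, z, a₃, a₄, b₃, b₄] be a polynomial ring over a field with variables as listed, and let I = (xz, yz, a₃x+b₃y, a₄x+b₄y). Then the listed four generators form a Gröbner basis of I with respect to any degree lexicographic order satisfying a₃ > b₃ > b₄ > a₄ > x > y > z. In particular, the initial ideal of I is generated by quadratic monomials. -/
open MvPolynomial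

/-- The degree-lexicographic key of a monomial exponent vector in seven variables,
where the variable with index `0` is largest, then `1`, etc.  Monomials are first
compared by total degree, then lexicographically. -/
noncomputable def degLexKey (m : Fin 7 →₀ ℕ) : ℕ ×ₗ Lex (Fin 7 → ℕ) :=
  toLex (m.sum fun _ e => e, toLex fun i => m i)

/-- `m` is the leading monomial of `f` for the degree-lexicographic order. -/
def IsLeadMonomial {k : Type} [Field k] (f : MvPolynomial (Fin 7) k) (m : Fin 7 →₀ ℕ) :
    Prop :=
  m ∈ f.support ∧ ∀ m' ∈ f.support, degLexKey m' ≤ degLexKey m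

/-- The initial ideal of `I` with respect to the degree-lexicographic order: the ideal
generated by the leading monomials of the nonzero elements of `I`. -/
noncomputable def initialIdeal {k : Type} [Field k] (I : Ideal (MvPolynomial (Fin 7) k)) :
    Ideal (MvPolynomial (Fin 7) k) :=
  Ideal.span { g | ∃ f ∈ I, ∃ m, IsLeadMonomial f m ∧ g = MvPolynomial.monomial m (1 : k) }

namespace GroebnerAux

open MvPolynomial Finsupp

noncomputable def mk7 (p q r s i j l : ℕ) : Fin 7 →₀ ℕ :=
  Finsupp.equivFunOnFinite.symm ![p, q, r, s, i, j, l]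

lemma mk7_eta (m : Fin 7 →₀ ℕ) : mk7 (m 0) (m 1) (m 2) (m 3) (m 4) (m 5) (m 6) = m := by
  ext t; fin_cases t <;> rfl

lemma mk7_sum (p q r s i j l : ℕ) :
    (mk7 p q r s i j l).sum (fun _ e => e) = p + q + r + s + i + j + l := by
  rw [Finsupp.sum_fintype _ _ (fun _ => rfl), Fin.sum_univ_seven]; rfl

lemma mk7_congr {p q r s i j l p' q' r' s' i' j' l' : ℕ}
    (h0 : p = p') (h1 : q = q') (h2 : r = r') (h3 : s = s')
    (h4 : i = i') (h5 : j = j') (h6 : l = l') :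
    mk7 p q r s i j l = mk7 p' q' r' s' i' j' l' := by subst_vars; rfl

lemma mk7_add (p q r s i j l p' q' r' s' i' j' l' : ℕ) :
    mk7 p q r s i j l + mk7 p' q' r' s' i' j' l' =
      mk7 (p + p') (q + q') (r + r') (s + s') (i + i') (j + j') (l + l') := by
  ext t; fin_cases t <;> rfl

lemma add_mk7 (u : Fin 7 →₀ ℕ) (p q r s i j l : ℕ) :
    u + mk7 p q r s i j l =
      mk7 (u 0 + p) (u 1 + q) (u 2 + r) (u 3 + s) (u 4 + i) (u 5 + j) (u 6 + l) := by
  conv_lhs => rw [← mk7_eta u, mk7_add]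

lemma sing0 : Finsupp.single (0 : Fin 7) 1 = mk7 1 0 0 0 0 0 0 := by
  ext t; fin_cases t <;> simp [mk7, Finsupp.single_apply, Finsupp.equivFunOnFinite] <;> decide
lemma sing1 : Finsupp.single (1 : Fin 7) 1 = mk7 0 1 0 0 0 0 0 := by
  ext t; fin_cases t <;> simp [mk7, Finsupp.single_apply, Finsupp.equivFunOnFinite] <;> decide
lemma sing2 : Finsupp.single (2 : Fin 7) 1 = mk7 0 0 1 0 0 0 0 := by
  ext t; fin_cases t <;> simp [mk7, Finsupp.single_apply, Finsupp.equivFunOnFinite] <;> decide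
lemma sing3 : Finsupp.single (3 : Fin 7) 1 = mk7 0 0 0 1 0 0 0 := by
  ext t; fin_cases t <;> simp [mk7, Finsupp.single_apply, Finsupp.equivFunOnFinite] <;> decide
lemma sing4 : Finsupp.single (4 : Fin 7) 1 = mk7 0 0 0 0 1 0 0 := by
  ext t; fin_cases t <;> simp [mk7, Finsupp.single_apply, Finsupp.equivFunOnFinite] <;> decide
lemma sing5 : Finsupp.single (5 : Fin 7) 1 = mk7 0 0 0 0 0 1 0 := by
  ext t; fin_cases t <;> simp [mk7, Finsupp.single_apply, Finsupp.equivFunOnFinite] <;> decide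
lemma sing6 : Finsupp.single (6 : Fin 7) 1 = mk7 0 0 0 0 0 0 1 := by
  ext t; fin_cases t <;> simp [mk7, Finsupp.single_apply, Finsupp.equivFunOnFinite] <;> decide

lemma pilex_lt {v w : Fin 7 → ℕ} (i : Fin 7) (h1 : ∀ j < i, v j = w j) (h2 : v i < w i) :
    toLex v < toLex w := ⟨i, fun j hj => h1 j hj, h2⟩

lemma finsupp_sum7 (m : Fin 7 →₀ ℕ) :
    m.sum (fun _ e => e) = m 0 + m 1 + m 2 + m 3 + m 4 + m 5 + m 6 := by
  conv_lhs => rw [← mk7_eta m, mk7_sum]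

lemma fin7_not_lt_zero : ∀ u : Fin 7, u < (0 : Fin 7) → False := by decide

lemma key_asymm {a b : Fin 7 →₀ ℕ} (h1 : degLexKey a ≤ degLexKey b)
    (h2 : degLexKey b < degLexKey a) : False := by
  unfold degLexKey at h1 h2
  rw [Prod.Lex.le_iff] at h1
  rw [Prod.Lex.lt_iff] at h2
  rcases h1 with h1 | ⟨h1e, h1le⟩ <;> rcases h2 with h2 | ⟨h2e, h2lt⟩
  · omega
  · omega
  · omega
  · exact absurd h1le (not_le_of_gt h2lt)

lemma key_antisymm {a b : Fin 7 →₀ ℕ} (h1 : degLexKey a ≤ degLexKey b)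
    (h2 : degLexKey b ≤ degLexKey a) : a = b := by
  unfold degLexKey at h1 h2
  rw [Prod.Lex.le_iff] at h1 h2
  rcases h1 with h1 | ⟨h1e, h1le⟩ <;> rcases h2 with h2 | ⟨h2e, h2le⟩
  · omega
  · omega
  · omega
  · have h3 : toLex (fun i => a i) = toLex (fun i => b i) := le_antisymm h1le h2le
    have h4 : (fun i => a i) = fun i => b i := congrArg ofLex h3
    ext t; exact congrFun h4 t

lemma key_lt_of_components {w m' : Fin 7 →₀ ℕ}
    (hdeg : w.sum (fun _ e => e) = m'.sum (fun _ e => e)) (t : Fin 7)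
    (hb : ∀ u < t, w u = m' u) (ht : w t < m' t) : degLexKey w < degLexKey m' := by
  unfold degLexKey
  rw [Prod.Lex.lt_iff]
  exact Or.inr ⟨hdeg, pilex_lt t (fun u hu => hb u hu) ht⟩

lemma key_le_of_components {w m' : Fin 7 →₀ ℕ}
    (hdeg : w.sum (fun _ e => e) = m'.sum (fun _ e => e)) (t : Fin 7)
    (hb : ∀ u < t, w u = m' u) (ht : w t < m' t) : degLexKey w ≤ degLexKey m' := by
  unfold degLexKey
  rw [Prod.Lex.le_iff]
  exact Or.inr ⟨hdeg, le_of_lt (pilex_lt t (fun u hu => hb u hu) ht)⟩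

noncomputable def nfm (k : Type) [Field k] (p q r s i j l : ℕ) : MvPolynomial (Fin 7) k :=
  if i = 0 ∧ j = 0 then monomial (mk7 p q r s i j l) 1
  else if 0 < l then 0
  else if i + r ≤ p then monomial (mk7 (p - i - r) (q + i + r) 0 (s + r) 0 (i + j) l) ((-1) ^ i)
  else if j + p ≤ r then monomial (mk7 0 (q + p) (r - j - p) (s + j + p) (i + j) 0 l) ((-1) ^ j)
  else monomial (mk7 0 (q + p) 0 (s + r) (i + r - p) (j + p - r) l) ((-1) ^ (p + r))

noncomputable def nf (k : Type) [Field k] (m : Fin 7 →₀ ℕ) : MvPolynomial (Fin 7) k :=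
  nfm k (m 0) (m 1) (m 2) (m 3) (m 4) (m 5) (m 6)

variable {k : Type} [Field k]

lemma nf_mk7 (p q r s i j l : ℕ) : nf k (mk7 p q r s i j l) = nfm k p q r s i j l := rfl

lemma monomial_congr {w w' : Fin 7 →₀ ℕ} {c c' : k} (hw : w = w') (hc : c = c') :
    (monomial w c : MvPolynomial (Fin 7) k) = monomial w' c' := by subst_vars; rfl

lemma monomial_add_monomial_eq_zero {w w' : Fin 7 →₀ ℕ} {c c' : k}
    (hw : w = w') (hc : c + c' = 0) :
    (monomial w c : MvPolynomial (Fin 7) k) + monomial w' c' = 0 := by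
  subst hw; rw [← map_add, hc, map_zero]

lemma nfm_g1 (p q r s i j l : ℕ) : nfm k p q r s (i + 1) j (l + 1) = 0 := by
  unfold nfm
  rw [if_neg (by omega), if_pos (by omega)]

lemma nfm_g2 (p q r s i j l : ℕ) : nfm k p q r s i (j + 1) (l + 1) = 0 := by
  unfold nfm
  rw [if_neg (by omega), if_pos (by omega)]

lemma nfm_g3 (p q r s i j l : ℕ) :
    nfm k (p + 1) q r s (i + 1) j l + nfm k p (q + 1) r s i (j + 1) l = 0 := by
  unfold nfm
  rw [if_neg (show ¬(i + 1 = 0 ∧ j = 0) by omega),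
    if_neg (show ¬(i = 0 ∧ j + 1 = 0) by omega)]
  by_cases hl : 0 < l
  · rw [if_pos hl, if_pos hl]; simp
  · rw [if_neg hl, if_neg hl]
    by_cases hT1 : i + r ≤ p
    · rw [if_pos (by omega : i + 1 + r ≤ p + 1), if_pos hT1]
      exact monomial_add_monomial_eq_zero
        (mk7_congr (by omega) (by omega) rfl rfl rfl (by omega) rfl)
        (by rw [pow_succ]; ring)
    · rw [if_neg (by omega : ¬ i + 1 + r ≤ p + 1), if_neg hT1]
      by_cases hT2 : j + 1 + p ≤ r
      · rw [if_pos (by omega : j + (p + 1) ≤ r), if_pos hT2]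
        exact monomial_add_monomial_eq_zero
          (mk7_congr rfl (by omega) (by omega) (by omega) (by omega) rfl rfl)
          (by rw [pow_succ]; ring)
      · rw [if_neg (by omega : ¬ j + (p + 1) ≤ r), if_neg hT2]
        exact monomial_add_monomial_eq_zero
          (mk7_congr rfl (by omega) rfl rfl (by omega) (by omega) rfl)
          (by rw [show p + 1 + r = (p + r) + 1 from by omega, pow_succ]; ring)

lemma nfm_g4 (p q r s i j l : ℕ) :
    nfm k p q r (s + 1) (i + 1) j l + nfm k p q (r + 1) s i (j + 1) l = 0 := by
  unfold nfm
  rw [if_neg (show ¬(i + 1 = 0 ∧ j = 0) by omega),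
    if_neg (show ¬(i = 0 ∧ j + 1 = 0) by omega)]
  by_cases hl : 0 < l
  · rw [if_pos hl, if_pos hl]; simp
  · rw [if_neg hl, if_neg hl]
    by_cases hT1 : i + 1 + r ≤ p
    · rw [if_pos hT1, if_pos (by omega : i + (r + 1) ≤ p)]
      exact monomial_add_monomial_eq_zero
        (mk7_congr (by omega) (by omega) rfl (by omega) rfl (by omega) rfl)
        (by rw [pow_succ]; ring)
    · rw [if_neg hT1, if_neg (by omega : ¬ i + (r + 1) ≤ p)]
      by_cases hT2 : j + p ≤ r
      · rw [if_pos hT2, if_pos (by omega : j + 1 + p ≤ r + 1)]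
        exact monomial_add_monomial_eq_zero
          (mk7_congr rfl rfl (by omega) (by omega) (by omega) rfl rfl)
          (by rw [pow_succ]; ring)
      · rw [if_neg hT2, if_neg (by omega : ¬ j + 1 + p ≤ r + 1)]
        exact monomial_add_monomial_eq_zero
          (mk7_congr rfl rfl rfl (by omega) (by omega) (by omega) rfl)
          (by rw [show p + (r + 1) = (p + r) + 1 from by omega, pow_succ]; ring)

noncomputable def Phi (k : Type) [Field k] :
    MvPolynomial (Fin 7) k →+ MvPolynomial (Fin 7) k :=
  AddMonoidHom.mk' (fun f => Finsupp.sum (AddMonoidAlgebra.coeff f) fun m c => c • nf k m)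
    (fun _ _ => Finsupp.sum_add_index' (fun _ => zero_smul k _) (fun _ b1 b2 => add_smul b1 b2 _))

lemma Phi_monomial (w : Fin 7 →₀ ℕ) (c : k) : Phi k (monomial w c) = c • nf k w := by
  show Finsupp.sum (AddMonoidAlgebra.coeff (monomial w c)) (fun m c => c • nf k m) = c • nf k w
  rw [← single_eq_monomial]
  exact Finsupp.sum_single_index (zero_smul k _)

lemma nf_std (m : Fin 7 →₀ ℕ) (h3 : ¬(1 ≤ m 0 ∧ 1 ≤ m 4)) (h4 : ¬(1 ≤ m 2 ∧ 1 ≤ m 5))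
    (h1 : ¬(1 ≤ m 4 ∧ 1 ≤ m 6)) (h2 : ¬(1 ≤ m 5 ∧ 1 ≤ m 6)) :
    nf k m = monomial m 1 := by
  unfold nf nfm
  by_cases hij : m 4 = 0 ∧ m 5 = 0
  · rw [if_pos hij, mk7_eta]
  · rw [if_neg hij, if_neg (show ¬ 0 < m 6 by omega)]
    by_cases hT1 : m 4 + m 2 ≤ m 0
    · rw [if_pos hT1]
      exact monomial_congr
        (((mk7_congr (by omega) (by omega) (by omega) (by omega) (by omega) (by omega)
          rfl).trans (mk7_eta m)))
        (by rw [show m 4 = 0 from by omega, pow_zero])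
    · rw [if_neg hT1]
      by_cases hT2 : m 5 + m 0 ≤ m 2
      · rw [if_pos hT2]
        exact monomial_congr
          (((mk7_congr (by omega) (by omega) (by omega) (by omega) (by omega) (by omega)
            rfl).trans (mk7_eta m)))
          (by rw [show m 5 = 0 from by omega, pow_zero])
      · rw [if_neg hT2]
        exact monomial_congr
          (((mk7_congr (by omega) (by omega) (by omega) (by omega) (by omega) (by omega)
            rfl).trans (mk7_eta m)))
          (by rw [show m 0 + m 2 = 0 from by omega, pow_zero])

lemma nf_coeff_zero (m' m : Fin 7 →₀ ℕ) (hne : m' ≠ m) (hle : degLexKey m' ≤ degLexKey m) :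
    coeff m (nf k m') = 0 := by
  unfold nf nfm
  by_cases hij : m' 4 = 0 ∧ m' 5 = 0
  · rw [if_pos hij, mk7_eta, coeff_monomial, if_neg hne]
  · rw [if_neg hij]
    by_cases hl : 0 < m' 6
    · rw [if_pos hl, coeff_zero]
    · rw [if_neg hl]
      by_cases hT1 : m' 4 + m' 2 ≤ m' 0
      · rw [if_pos hT1, coeff_monomial, if_neg ]
        intro hwm
        by_cases hir : m' 4 = 0 ∧ m' 2 = 0
        · exact hne ((((mk7_congr (by omega) (by omega) (by omega) (by omega) (by omega)
            (by omega) rfl).trans (mk7_eta m')).symm.trans hwm))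
        · have hk : degLexKey (mk7 (m' 0 - m' 4 - m' 2) (m' 1 + m' 4 + m' 2) 0 (m' 3 + m' 2) 0
              (m' 4 + m' 5) (m' 6)) < degLexKey m' := by
            refine key_lt_of_components (by rw [mk7_sum, finsupp_sum7]; omega) 0
              (fun u hu => absurd (fin7_not_lt_zero u hu) not_false) ?_
            show m' 0 - m' 4 - m' 2 < m' 0
            omega
          exact key_asymm hle (hwm ▸ hk)
      · rw [if_neg hT1]
        by_cases hT2 : m' 5 + m' 0 ≤ m' 2
        · rw [if_pos hT2, coeff_monomial, if_neg]
          intro hwm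
          by_cases hpj : m' 0 = 0 ∧ m' 5 = 0
          · exact hne ((((mk7_congr (by omega) (by omega) (by omega) (by omega) (by omega)
              (by omega) rfl).trans (mk7_eta m')).symm.trans hwm))
          · have hk : degLexKey (mk7 0 (m' 1 + m' 0) (m' 2 - m' 5 - m' 0) (m' 3 + m' 5 + m' 0)
                (m' 4 + m' 5) 0 (m' 6)) < degLexKey m' := by
              by_cases hp : 0 < m' 0
              · refine key_lt_of_components (by rw [mk7_sum, finsupp_sum7]; omega) 0
                  (fun u hu => absurd (fin7_not_lt_zero u hu) not_false) ?_
                show 0 < m' 0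
                omega
              · refine key_lt_of_components (by rw [mk7_sum, finsupp_sum7]; omega) 2
                  ?_ ?_
                · intro u hu
                  fin_cases u
                  · show (0 : ℕ) = m' 0; omega
                  · show m' 1 + m' 0 = m' 1; omega
                  all_goals exact absurd hu (by decide)
                · show m' 2 - m' 5 - m' 0 < m' 2
                  omega
            exact key_asymm hle (hwm ▸ hk)
        · rw [if_neg hT2, coeff_monomial, if_neg]
          intro hwm
          by_cases hpr : m' 0 = 0 ∧ m' 2 = 0
          · exact hne ((((mk7_congr (by omega) (by omega) (by omega) (by omega) (by omega)
              (by omega) rfl).trans (mk7_eta m')).symm.trans hwm))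
          · have hk : degLexKey (mk7 0 (m' 1 + m' 0) 0 (m' 3 + m' 2) (m' 4 + m' 2 - m' 0)
                (m' 5 + m' 0 - m' 2) (m' 6)) < degLexKey m' := by
              by_cases hp : 0 < m' 0
              · refine key_lt_of_components (by rw [mk7_sum, finsupp_sum7]; omega) 0
                  (fun u hu => absurd (fin7_not_lt_zero u hu) not_false) ?_
                show 0 < m' 0
                omega
              · refine key_lt_of_components (by rw [mk7_sum, finsupp_sum7]; omega) 2
                  ?_ ?_
                · intro u hu
                  fin_cases u
                  · show (0 : ℕ) = m' 0; omega
                  · show m' 1 + m' 0 = m' 1; omega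
                  all_goals exact absurd hu (by decide)
                · show (0 : ℕ) < m' 2
                  omega
            exact key_asymm hle (hwm ▸ hk)

lemma X_eq (n : Fin 7) : (X n : MvPolynomial (Fin 7) k) = monomial (Finsupp.single n 1) 1 := rfl

lemma g1_eq : (X 4 * X 6 : MvPolynomial (Fin 7) k) = monomial (mk7 0 0 0 0 1 0 1) 1 := by
  rw [X_eq, X_eq, monomial_mul, sing4, sing6, mk7_add, one_mul]

lemma g2_eq : (X 5 * X 6 : MvPolynomial (Fin 7) k) = monomial (mk7 0 0 0 0 0 1 1) 1 := by
  rw [X_eq, X_eq, monomial_mul, sing5, sing6, mk7_add, one_mul]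

lemma g3_eq : (X 0 * X 4 + X 1 * X 5 : MvPolynomial (Fin 7) k) =
    monomial (mk7 1 0 0 0 1 0 0) 1 + monomial (mk7 0 1 0 0 0 1 0) 1 := by
  rw [X_eq, X_eq, X_eq, X_eq, monomial_mul, monomial_mul, sing0, sing4, sing1, sing5,
    mk7_add, mk7_add, one_mul]

lemma g4_eq : (X 3 * X 4 + X 2 * X 5 : MvPolynomial (Fin 7) k) =
    monomial (mk7 0 0 0 1 1 0 0) 1 + monomial (mk7 0 0 1 0 0 1 0) 1 := by
  rw [X_eq, X_eq, X_eq, X_eq, monomial_mul, monomial_mul, sing3, sing4, sing2, sing5,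
    mk7_add, mk7_add, one_mul]

lemma Phi_mul_g1 (f : MvPolynomial (Fin 7) k) : Phi k (f * (X 4 * X 6)) = 0 := by
  induction f using MvPolynomial.induction_on' with
  | add p q hp hq => rw [add_mul, map_add, hp, hq, add_zero]
  | monomial u a =>
    rw [g1_eq, monomial_mul, mul_one, Phi_monomial, add_mk7, nf_mk7]
    simp only [add_zero]
    rw [nfm_g1, smul_zero]

lemma Phi_mul_g2 (f : MvPolynomial (Fin 7) k) : Phi k (f * (X 5 * X 6)) = 0 := by
  induction f using MvPolynomial.induction_on' with
  | add p q hp hq => rw [add_mul, map_add, hp, hq, add_zero]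
  | monomial u a =>
    rw [g2_eq, monomial_mul, mul_one, Phi_monomial, add_mk7, nf_mk7]
    simp only [add_zero]
    rw [nfm_g2, smul_zero]

lemma Phi_mul_g3 (f : MvPolynomial (Fin 7) k) : Phi k (f * (X 0 * X 4 + X 1 * X 5)) = 0 := by
  induction f using MvPolynomial.induction_on' with
  | add p q hp hq => rw [add_mul, map_add, hp, hq, add_zero]
  | monomial u a =>
    rw [g3_eq, mul_add, monomial_mul, monomial_mul, mul_one, map_add, Phi_monomial,
      Phi_monomial, add_mk7, add_mk7, nf_mk7, nf_mk7, ← smul_add]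
    simp only [add_zero]
    rw [nfm_g3, smul_zero]

lemma Phi_mul_g4 (f : MvPolynomial (Fin 7) k) : Phi k (f * (X 3 * X 4 + X 2 * X 5)) = 0 := by
  induction f using MvPolynomial.induction_on' with
  | add p q hp hq => rw [add_mul, map_add, hp, hq, add_zero]
  | monomial u a =>
    rw [g4_eq, mul_add, monomial_mul, monomial_mul, mul_one, map_add, Phi_monomial,
      Phi_monomial, add_mk7, add_mk7, nf_mk7, nf_mk7, ← smul_add]
    simp only [add_zero]
    rw [nfm_g4, smul_zero]

lemma Phi_span_zero (f : MvPolynomial (Fin 7) k)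
    (hf : f ∈ Ideal.span ({X 4 * X 6, X 5 * X 6, X 0 * X 4 + X 1 * X 5, X 3 * X 4 + X 2 * X 5} :
      Set (MvPolynomial (Fin 7) k))) : Phi k f = 0 := by
  have hf' : f ∈ Submodule.span (MvPolynomial (Fin 7) k)
      ({X 4 * X 6, X 5 * X 6, X 0 * X 4 + X 1 * X 5, X 3 * X 4 + X 2 * X 5} :
        Set (MvPolynomial (Fin 7) k)) := hf
  obtain ⟨c, hsupp, rfl⟩ := Submodule.mem_span_set.mp hf'
  rw [map_finsuppSum]
  apply Finset.sum_eq_zero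
  intro g hg
  show Phi k (c g • g) = 0
  have hgmem := hsupp hg
  simp only [Set.mem_insert_iff, Set.mem_singleton_iff] at hgmem
  rcases hgmem with rfl | rfl | rfl | rfl
  · rw [smul_eq_mul]; exact Phi_mul_g1 _
  · rw [smul_eq_mul]; exact Phi_mul_g2 _
  · rw [smul_eq_mul]; exact Phi_mul_g3 _
  · rw [smul_eq_mul]; exact Phi_mul_g4 _

lemma lead_mem_cases {f : MvPolynomial (Fin 7) k}
    (hf : f ∈ Ideal.span ({X 4 * X 6, X 5 * X 6, X 0 * X 4 + X 1 * X 5, X 3 * X 4 + X 2 * X 5} :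
      Set (MvPolynomial (Fin 7) k)))
    {m : Fin 7 →₀ ℕ} (hm : IsLeadMonomial f m) :
    (1 ≤ m 4 ∧ 1 ≤ m 6) ∨ (1 ≤ m 5 ∧ 1 ≤ m 6) ∨ (1 ≤ m 0 ∧ 1 ≤ m 4) ∨ (1 ≤ m 2 ∧ 1 ≤ m 5) := by
  by_contra hcon
  simp only [not_or] at hcon
  obtain ⟨h1, h2, h3, h4⟩ := hcon
  have hphi : Phi k f = 0 := Phi_span_zero f hf
  have hc : coeff m f ≠ 0 := MvPolynomial.mem_support_iff.mp hm.1
  have hkey : coeff m (Phi k f) = coeff m f := by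
    rw [show Phi k f = ∑ m' ∈ f.support, coeff m' f • nf k m' from
      sum_def (p := f) (b := fun m c => c • nf k m)]
    rw [coeff_sum, Finset.sum_eq_single_of_mem m hm.1]
    · rw [coeff_smul, nf_std m h3 h4 h1 h2, coeff_monomial, if_pos rfl, smul_eq_mul, mul_one]
    · intro b hb hbne
      rw [coeff_smul, nf_coeff_zero b m hbne (hm.2 b hb), smul_eq_mul, mul_zero]
  rw [hphi, coeff_zero] at hkey
  exact hc hkey.symm

lemma isLead_monomial (w : Fin 7 →₀ ℕ) : IsLeadMonomial (monomial w (1 : k)) w := by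
  constructor
  · rw [MvPolynomial.mem_support_iff, coeff_monomial, if_pos rfl]; exact one_ne_zero
  · intro m' hm'
    rw [MvPolynomial.mem_support_iff, coeff_monomial] at hm'
    by_cases h : w = m'
    · subst h; exact le_refl _
    · rw [if_neg h] at hm'; exact absurd rfl hm'

lemma isLead_pair {w v : Fin 7 →₀ ℕ} (hne : v ≠ w) (hle : degLexKey v ≤ degLexKey w) :
    IsLeadMonomial (monomial w (1 : k) + monomial v 1) w := by
  constructor
  · rw [MvPolynomial.mem_support_iff, coeff_add, coeff_monomial, coeff_monomial, if_pos rfl, if_neg hne]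
    simp
  · intro m' hm'
    rw [MvPolynomial.mem_support_iff, coeff_add, coeff_monomial, coeff_monomial] at hm'
    by_cases hw : w = m'
    · subst hw; exact le_refl _
    · by_cases hv : v = m'
      · subst hv; exact hle
      · rw [if_neg hw, if_neg hv] at hm'; simp at hm'

lemma isLead_pair' {w v : Fin 7 →₀ ℕ} (hne : v ≠ w) (hle : degLexKey v ≤ degLexKey w) :
    IsLeadMonomial (monomial v (1 : k) + monomial w 1) w := by
  rw [add_comm]; exact isLead_pair hne hle

lemma lead_unique {f : MvPolynomial (Fin 7) k} {m m' : Fin 7 →₀ ℕ}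
    (h : IsLeadMonomial f m) (h' : IsLeadMonomial f m') : m = m' :=
  key_antisymm (h'.2 m h.1) (h.2 m' h'.1)

lemma ne34 : mk7 0 1 0 0 0 1 0 ≠ mk7 1 0 0 0 1 0 0 := by
  intro h
  exact absurd (DFunLike.congr_fun h 0) (by decide)

lemma ne44 : mk7 0 0 0 1 1 0 0 ≠ mk7 0 0 1 0 0 1 0 := by
  intro h
  exact absurd (DFunLike.congr_fun h 2) (by decide)

lemma le34 : degLexKey (mk7 0 1 0 0 0 1 0) ≤ degLexKey (mk7 1 0 0 0 1 0 0) := by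
  refine key_le_of_components (by rw [mk7_sum, mk7_sum]) 0
    (fun u hu => absurd (fin7_not_lt_zero u hu) not_false) ?_
  show (0 : ℕ) < 1
  omega

lemma le44 : degLexKey (mk7 0 0 0 1 1 0 0) ≤ degLexKey (mk7 0 0 1 0 0 1 0) := by
  refine key_le_of_components (by rw [mk7_sum, mk7_sum]) 2 ?_ ?_
  · intro u hu
    fin_cases u
    · rfl
    · rfl
    all_goals exact absurd hu (by decide)
  · show (0 : ℕ) < 1
    omega

lemma isLead_g1 : IsLeadMonomial (X 4 * X 6 : MvPolynomial (Fin 7) k) (mk7 0 0 0 0 1 0 1) := by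
  rw [g1_eq]; exact isLead_monomial _

lemma isLead_g2 : IsLeadMonomial (X 5 * X 6 : MvPolynomial (Fin 7) k) (mk7 0 0 0 0 0 1 1) := by
  rw [g2_eq]; exact isLead_monomial _

lemma isLead_g3 : IsLeadMonomial (X 0 * X 4 + X 1 * X 5 : MvPolynomial (Fin 7) k)
    (mk7 1 0 0 0 1 0 0) := by
  rw [g3_eq]; exact isLead_pair ne34 le34

lemma isLead_g4 : IsLeadMonomial (X 3 * X 4 + X 2 * X 5 : MvPolynomial (Fin 7) k)
    (mk7 0 0 1 0 0 1 0) := by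
  rw [g4_eq]; exact isLead_pair' ne44 le44

lemma div_monomial {w m : Fin 7 →₀ ℕ} (hle : w ≤ m) :
    (monomial m (1 : k)) = monomial (m - w) 1 * monomial w 1 := by
  rw [monomial_mul, one_mul, tsub_add_cancel_of_le hle]

lemma main_eq :
    initialIdeal (Ideal.span
      ({X 4 * X 6, X 5 * X 6, X 0 * X 4 + X 1 * X 5, X 3 * X 4 + X 2 * X 5} :
        Set (MvPolynomial (Fin 7) k))) =
    Ideal.span ({monomial (mk7 0 0 0 0 1 0 1) 1, monomial (mk7 0 0 0 0 0 1 1) 1,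
      monomial (mk7 1 0 0 0 1 0 0) 1, monomial (mk7 0 0 1 0 0 1 0) 1} :
        Set (MvPolynomial (Fin 7) k)) := by
  apply le_antisymm
  · unfold initialIdeal
    rw [Ideal.span_le]
    rintro h ⟨f, hfI, m, hlead, rfl⟩
    rw [SetLike.mem_coe]
    rcases lead_mem_cases hfI hlead with hd | hd | hd | hd
    · have hle : mk7 0 0 0 0 1 0 1 ≤ m := by
        rw [Finsupp.le_def]
        intro t
        fin_cases t
        · exact Nat.zero_le _
        · exact Nat.zero_le _
        · exact Nat.zero_le _
        · exact Nat.zero_le _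
        · exact hd.1
        · exact Nat.zero_le _
        · exact hd.2
      rw [div_monomial hle]
      exact Ideal.mul_mem_left _ _ (Ideal.subset_span (by simp))
    · have hle : mk7 0 0 0 0 0 1 1 ≤ m := by
        rw [Finsupp.le_def]
        intro t
        fin_cases t
        · exact Nat.zero_le _
        · exact Nat.zero_le _
        · exact Nat.zero_le _
        · exact Nat.zero_le _
        · exact Nat.zero_le _
        · exact hd.1
        · exact hd.2
      rw [div_monomial hle]
      exact Ideal.mul_mem_left _ _ (Ideal.subset_span (by simp))
    · have hle : mk7 1 0 0 0 1 0 0 ≤ m := by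
        rw [Finsupp.le_def]
        intro t
        fin_cases t
        · exact hd.1
        · exact Nat.zero_le _
        · exact Nat.zero_le _
        · exact Nat.zero_le _
        · exact hd.2
        · exact Nat.zero_le _
        · exact Nat.zero_le _
      rw [div_monomial hle]
      exact Ideal.mul_mem_left _ _ (Ideal.subset_span (by simp))
    · have hle : mk7 0 0 1 0 0 1 0 ≤ m := by
        rw [Finsupp.le_def]
        intro t
        fin_cases t
        · exact Nat.zero_le _
        · exact Nat.zero_le _
        · exact hd.1
        · exact Nat.zero_le _
        · exact Nat.zero_le _
        · exact hd.2
        · exact Nat.zero_le _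
      rw [div_monomial hle]
      exact Ideal.mul_mem_left _ _ (Ideal.subset_span (by simp))
  · rw [Ideal.span_le]
    intro h hh
    simp only [Set.mem_insert_iff, Set.mem_singleton_iff] at hh
    rw [SetLike.mem_coe]
    unfold initialIdeal
    rcases hh with rfl | rfl | rfl | rfl
    · exact Ideal.subset_span
        ⟨X 4 * X 6, Ideal.subset_span (by simp), mk7 0 0 0 0 1 0 1, isLead_g1, rfl⟩
    · exact Ideal.subset_span
        ⟨X 5 * X 6, Ideal.subset_span (by simp), mk7 0 0 0 0 0 1 1, isLead_g2, rfl⟩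
    · exact Ideal.subset_span
        ⟨X 0 * X 4 + X 1 * X 5, Ideal.subset_span (by simp), mk7 1 0 0 0 1 0 0, isLead_g3, rfl⟩
    · exact Ideal.subset_span
        ⟨X 3 * X 4 + X 2 * X 5, Ideal.subset_span (by simp), mk7 0 0 1 0 0 1 0, isLead_g4, rfl⟩

lemma set_eq :
    {h | ∃ g ∈ ({X 4 * X 6, X 5 * X 6, X 0 * X 4 + X 1 * X 5, X 3 * X 4 + X 2 * X 5} :
        Set (MvPolynomial (Fin 7) k)), ∃ m, IsLeadMonomial g m ∧ h = monomial m (1 : k)} =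
    ({monomial (mk7 0 0 0 0 1 0 1) 1, monomial (mk7 0 0 0 0 0 1 1) 1,
      monomial (mk7 1 0 0 0 1 0 0) 1, monomial (mk7 0 0 1 0 0 1 0) 1} :
        Set (MvPolynomial (Fin 7) k)) := by
  ext h
  constructor
  · rintro ⟨g, hg, m, hm, rfl⟩
    simp only [Set.mem_insert_iff, Set.mem_singleton_iff] at hg ⊢
    rcases hg with rfl | rfl | rfl | rfl
    · exact Or.inl (by rw [lead_unique hm isLead_g1])
    · exact Or.inr (Or.inl (by rw [lead_unique hm isLead_g2]))
    · exact Or.inr (Or.inr (Or.inl (by rw [lead_unique hm isLead_g3])))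
    · exact Or.inr (Or.inr (Or.inr (by rw [lead_unique hm isLead_g4])))
  · intro hh
    simp only [Set.mem_insert_iff, Set.mem_singleton_iff] at hh
    rcases hh with rfl | rfl | rfl | rfl
    · exact ⟨X 4 * X 6, by simp, mk7 0 0 0 0 1 0 1, isLead_g1, rfl⟩
    · exact ⟨X 5 * X 6, by simp, mk7 0 0 0 0 0 1 1, isLead_g2, rfl⟩
    · exact ⟨X 0 * X 4 + X 1 * X 5, by simp, mk7 1 0 0 0 1 0 0, isLead_g3, rfl⟩
    · exact ⟨X 3 * X 4 + X 2 * X 5, by simp, mk7 0 0 1 0 0 1 0, isLead_g4, rfl⟩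

end GroebnerAux

/-- In `S = k[a₃, b₃, b₄, a₄, x, y, z]` (variables listed in decreasing order, realized as
`X 0 > X 1 > ⋯ > X 6`), the four generators `xz, yz, a₃x + b₃y, a₄x + b₄y` form a Gröbner
basis of the ideal they generate with respect to the degree-lexicographic order:
the initial ideal of `I` is generated by the leading monomials of the four generators.
In particular, the initial ideal of `I` is generated by quadratic monomials. -/



theorem groebner_basis_deglex {k : Type} [Field k]
    (a₃ b₃ b₄ a₄ x y z : MvPolynomial (Fin 7) k)
    (ha₃ : a₃ = X 0) (hb₃ : b₃ = X 1) (hb₄ : b₄ = X 2) (ha₄ : a₄ = X 3)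
    (hx : x = X 4) (hy : y = X 5) (hz : z = X 6)
    (G : Set (MvPolynomial (Fin 7) k))
    (hG : G = {x * z, y * z, a₃ * x + b₃ * y, a₄ * x + b₄ * y})
    (I : Ideal (MvPolynomial (Fin 7) k)) (hI : I = Ideal.span G) :
    initialIdeal I =
      Ideal.span { h | ∃ g ∈ G, ∃ m, IsLeadMonomial g m ∧
        h = MvPolynomial.monomial m (1 : k) } ∧
    ∃ E : Set (Fin 7 →₀ ℕ), (∀ m ∈ E, m.sum (fun _ e => e) = 2) ∧
      initialIdeal I = Ideal.span ((fun m => MvPolynomial.monomial m (1 : k)) '' E) := by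
  subst ha₃ hb₃ hb₄ ha₄ hx hy hz hG hI
  constructor
  · rw [GroebnerAux.main_eq, GroebnerAux.set_eq]
  · refine ⟨{GroebnerAux.mk7 0 0 0 0 1 0 1, GroebnerAux.mk7 0 0 0 0 0 1 1,
      GroebnerAux.mk7 1 0 0 0 1 0 0, GroebnerAux.mk7 0 0 1 0 0 1 0}, ?_, ?_⟩
    · intro m hm
      simp only [Set.mem_insert_iff, Set.mem_singleton_iff] at hm
      rcases hm with rfl | rfl | rfl | rfl <;> norm_num [GroebnerAux.mk7_sum]
    · rw [GroebnerAux.main_eq]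
      congr 1
      simp only [Set.image_insert_eq, Set.image_singleton]
end

section
/- Let R = k[x, y, a, b]/(bx, xy, ax − by, x² − y²), bigraded by deg x = deg y = (1,0) and deg a = deg b = (0,1). Then the elements a^i b^j (i, j ≥ 0), x a^i (i ≥ 0), y a^i (i ≥ 0), and x² form a k-vector-space basis of R. -/
open MvPolynomial

noncomputable section

variable (k : Type) [Field k]

/-- The defining ideal `(bx, xy, ax − by, x² − y²)` of `R`, where
`x = X 0`, `y = X 1`, `a = X 2`, `b = X 3` in `k[x,y,a,b]`. -/
def rIdeal : Ideal (MvPolynomial (Fin 4) k) :=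
  Ideal.span {X 3 * X 0, X 0 * X 1, X 2 * X 0 - X 3 * X 1, X 0 ^ 2 - X 1 ^ 2}

/-- The ring `R = k[x,y,a,b]/(bx, xy, ax − by, x² − y²)`. -/
def Rring := MvPolynomial (Fin 4) k ⧸ rIdeal k

instance : CommRing (Rring k) := by unfold Rring; infer_instance
instance : Algebra k (Rring k) := by unfold Rring; infer_instance

/-- The claimed basis of `R`: the monomials `aⁱbʲ`, `xaⁱ`, `yaⁱ` and `x²`. -/
def basisFamily : (ℕ × ℕ) ⊕ ℕ ⊕ ℕ ⊕ Unit → Rring k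
  | Sum.inl (i, j) => Ideal.Quotient.mk (rIdeal k) (X 2 ^ i * X 3 ^ j)
  | Sum.inr (Sum.inl i) => Ideal.Quotient.mk (rIdeal k) (X 0 * X 2 ^ i)
  | Sum.inr (Sum.inr (Sum.inl i)) => Ideal.Quotient.mk (rIdeal k) (X 1 * X 2 ^ i)
  | Sum.inr (Sum.inr (Sum.inr _)) => Ideal.Quotient.mk (rIdeal k) (X 0 ^ 2)

abbrev Idx : Type := (ℕ × ℕ) ⊕ ℕ ⊕ ℕ ⊕ Unit

def T (p q i j : ℕ) : Option Idx :=
  if p = 0 ∧ q = 0 then some (.inl (i, j))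
  else if p = 1 ∧ q = 0 ∧ j = 0 then some (.inr (.inl i))
  else if p = 0 ∧ q = 1 ∧ j = 0 then some (.inr (.inr (.inl i)))
  else if p = 0 ∧ q = 1 ∧ j = 1 then some (.inr (.inl (i + 1)))
  else if (p = 2 ∧ q = 0 ∨ p = 0 ∧ q = 2) ∧ i = 0 ∧ j = 0 then some (.inr (.inr (.inr ())))
  else none

def vfun (m : Fin 4 →₀ ℕ) : Idx →₀ k :=
  (T (m 0) (m 1) (m 2) (m 3)).elim 0 fun e => Finsupp.single e 1

def phi : MvPolynomial (Fin 4) k →ₗ[k] (Idx →₀ k) :=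
  (MvPolynomial.basisMonomials (Fin 4) k).constr ℕ (vfun k)

lemma phi_monomial (m : Fin 4 →₀ ℕ) (c : k) :
    phi k (monomial m c) = (T (m 0) (m 1) (m 2) (m 3)).elim 0 fun e => Finsupp.single e c := by
  have h : monomial m c = c • (MvPolynomial.basisMonomials (Fin 4) k m) := by
    rw [coe_basisMonomials]
    simp [smul_monomial]
  rw [h, map_smul]
  unfold phi
  rw [Module.Basis.constr_basis]
  unfold vfun
  cases T (m 0) (m 1) (m 2) (m 3) <;> simp [Finsupp.smul_single]


lemma T_none {p q i j : ℕ} (h1 : ¬(p = 0 ∧ q = 0)) (h2 : ¬(p = 1 ∧ q = 0 ∧ j = 0))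
    (h3 : ¬(p = 0 ∧ q = 1 ∧ j = 0)) (h4 : ¬(p = 0 ∧ q = 1 ∧ j = 1))
    (h5 : ¬((p = 2 ∧ q = 0 ∨ p = 0 ∧ q = 2) ∧ i = 0 ∧ j = 0)) : T p q i j = none := by
  simp only [T, if_neg h1, if_neg h2, if_neg h3, if_neg h4, if_neg h5]

lemma phi_mul_mono (u : Fin 4 →₀ ℕ) (a : k) (s : Fin 4 →₀ ℕ) :
    phi k (monomial u a * monomial s 1) =
      (T (u 0 + s 0) (u 1 + s 1) (u 2 + s 2) (u 3 + s 3)).elim 0 fun e => Finsupp.single e a := by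
  rw [monomial_mul, mul_one, phi_monomial]
  simp [Finsupp.add_apply]

lemma single_coords (n : Fin 4) (c : ℕ) (v : Fin 4) :
    (Finsupp.single n c) v = if n = v then c else 0 := Finsupp.single_apply

lemma phi_ideal {p : MvPolynomial (Fin 4) k} (hp : p ∈ rIdeal k) : phi k p = 0 := by
  have key : ∀ g ∈ ({X 3 * X 0, X 0 * X 1, X 2 * X 0 - X 3 * X 1, X 0 ^ 2 - X 1 ^ 2} :
      Set (MvPolynomial (Fin 4) k)), ∀ f, phi k (f * g) = 0 := by
    intro g hg f
    induction f using MvPolynomial.induction_on' with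
    | add p q hp' hq' => rw [add_mul, map_add, hp', hq', add_zero]
    | monomial u a =>
      simp only [Set.mem_insert_iff, Set.mem_singleton_iff] at hg
      rcases hg with rfl | rfl | rfl | rfl
      · have hg : (X 3 * X 0 : MvPolynomial (Fin 4) k) =
            monomial (Finsupp.single 3 1 + Finsupp.single 0 1) 1 := by
          rw [X, X, monomial_mul, mul_one]
        rw [hg, phi_mul_mono]
        have : T (u 0 + (Finsupp.single 3 1 + Finsupp.single 0 1 : Fin 4 →₀ ℕ) 0)
            (u 1 + (Finsupp.single 3 1 + Finsupp.single 0 1 : Fin 4 →₀ ℕ) 1)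
            (u 2 + (Finsupp.single 3 1 + Finsupp.single 0 1 : Fin 4 →₀ ℕ) 2)
            (u 3 + (Finsupp.single 3 1 + Finsupp.single 0 1 : Fin 4 →₀ ℕ) 3) = none := by
          simp [Finsupp.single_apply]
          rw [T_none] <;> omega
        rw [this]; rfl
      · have hg : (X 0 * X 1 : MvPolynomial (Fin 4) k) =
            monomial (Finsupp.single 0 1 + Finsupp.single 1 1) 1 := by
          rw [X, X, monomial_mul, mul_one]
        rw [hg, phi_mul_mono]
        have : T (u 0 + (Finsupp.single 0 1 + Finsupp.single 1 1 : Fin 4 →₀ ℕ) 0)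
            (u 1 + (Finsupp.single 0 1 + Finsupp.single 1 1 : Fin 4 →₀ ℕ) 1)
            (u 2 + (Finsupp.single 0 1 + Finsupp.single 1 1 : Fin 4 →₀ ℕ) 2)
            (u 3 + (Finsupp.single 0 1 + Finsupp.single 1 1 : Fin 4 →₀ ℕ) 3) = none := by
          simp [Finsupp.single_apply]
          rw [T_none] <;> omega
        rw [this]; rfl
      · have hg1 : (X 2 * X 0 : MvPolynomial (Fin 4) k) =
            monomial (Finsupp.single 2 1 + Finsupp.single 0 1) 1 := by
          rw [X, X, monomial_mul, mul_one]
        have hg2 : (X 3 * X 1 : MvPolynomial (Fin 4) k) =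
            monomial (Finsupp.single 3 1 + Finsupp.single 1 1) 1 := by
          rw [X, X, monomial_mul, mul_one]
        rw [mul_sub, map_sub, hg1, hg2, phi_mul_mono, phi_mul_mono]
        have e1 : ∀ v : Fin 4, (Finsupp.single 2 1 + Finsupp.single 0 1 : Fin 4 →₀ ℕ) v =
            (Finsupp.single (2:Fin 4) 1) v + (Finsupp.single (0:Fin 4) 1) v := fun v => rfl
        have : T (u 0 + (Finsupp.single 2 1 + Finsupp.single 0 1 : Fin 4 →₀ ℕ) 0)
            (u 1 + (Finsupp.single 2 1 + Finsupp.single 0 1 : Fin 4 →₀ ℕ) 1)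
            (u 2 + (Finsupp.single 2 1 + Finsupp.single 0 1 : Fin 4 →₀ ℕ) 2)
            (u 3 + (Finsupp.single 2 1 + Finsupp.single 0 1 : Fin 4 →₀ ℕ) 3)
            = T (u 0 + (Finsupp.single 3 1 + Finsupp.single 1 1 : Fin 4 →₀ ℕ) 0)
            (u 1 + (Finsupp.single 3 1 + Finsupp.single 1 1 : Fin 4 →₀ ℕ) 1)
            (u 2 + (Finsupp.single 3 1 + Finsupp.single 1 1 : Fin 4 →₀ ℕ) 2)
            (u 3 + (Finsupp.single 3 1 + Finsupp.single 1 1 : Fin 4 →₀ ℕ) 3) := by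
          simp [Finsupp.single_apply]
          by_cases h : u 0 = 0 ∧ u 1 = 0 ∧ u 3 = 0
          · obtain ⟨h0, h1, h3⟩ := h
            rw [h0, h1, h3]
            simp [T, Finsupp.single_apply]
          · rw [T_none, T_none] <;> omega
        rw [this, sub_self]
      · have hg1 : (X 0 ^ 2 : MvPolynomial (Fin 4) k) = monomial (Finsupp.single 0 2) 1 :=
          X_pow_eq_monomial
        have hg2 : (X 1 ^ 2 : MvPolynomial (Fin 4) k) = monomial (Finsupp.single 1 2) 1 :=
          X_pow_eq_monomial
        rw [mul_sub, map_sub, hg1, hg2, phi_mul_mono, phi_mul_mono]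
        have : T (u 0 + (Finsupp.single 0 2 : Fin 4 →₀ ℕ) 0)
            (u 1 + (Finsupp.single 0 2 : Fin 4 →₀ ℕ) 1)
            (u 2 + (Finsupp.single 0 2 : Fin 4 →₀ ℕ) 2)
            (u 3 + (Finsupp.single 0 2 : Fin 4 →₀ ℕ) 3)
            = T (u 0 + (Finsupp.single 1 2 : Fin 4 →₀ ℕ) 0)
            (u 1 + (Finsupp.single 1 2 : Fin 4 →₀ ℕ) 1)
            (u 2 + (Finsupp.single 1 2 : Fin 4 →₀ ℕ) 2)
            (u 3 + (Finsupp.single 1 2 : Fin 4 →₀ ℕ) 3) := by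
          simp [Finsupp.single_apply]
          by_cases h : u 0 = 0 ∧ u 1 = 0 ∧ u 2 = 0 ∧ u 3 = 0
          · obtain ⟨h0, h1, h2, h3⟩ := h
            rw [h0, h1, h2, h3]
            simp [T, Finsupp.single_apply]
          · rw [T_none, T_none] <;> omega
        rw [this, sub_self]
  have main : ∀ f, phi k (f * p) = 0 := by
    refine Submodule.span_induction (p := fun x _ => ∀ f : MvPolynomial (Fin 4) k,
      phi k (f * x) = 0) key ?_ ?_ ?_ hp
    · intro f; rw [mul_zero, map_zero]
    · intro x y _ _ hx hy f; rw [mul_add, map_add, hx f, hy f, add_zero]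
    · intro r x _ hx f; rw [smul_eq_mul, ← mul_assoc, hx]
  simpa using main 1

def rep : Idx → MvPolynomial (Fin 4) k
  | .inl (i, j) => X 2 ^ i * X 3 ^ j
  | .inr (.inl i) => X 0 * X 2 ^ i
  | .inr (.inr (.inl i)) => X 1 * X 2 ^ i
  | .inr (.inr (.inr _)) => X 0 ^ 2

lemma phi_rep (e : Idx) : phi k (rep k e) = Finsupp.single e 1 := by
  rcases e with ⟨i, j⟩ | i | i | _
  · show phi k (X 2 ^ i * X 3 ^ j) = _
    rw [X_pow_eq_monomial, X_pow_eq_monomial, monomial_mul, mul_one, phi_monomial]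
    have : ∀ v : Fin 4, ((Finsupp.single 2 i + Finsupp.single 3 j : Fin 4 →₀ ℕ)) v =
        (Finsupp.single (2 : Fin 4) i) v + (Finsupp.single (3 : Fin 4) j) v :=
      fun v => rfl
    rw [this 0, this 1, this 2, this 3]
    simp [Finsupp.single_apply, T]
  · show phi k (X 0 * X 2 ^ i) = _
    rw [show (X 0 : MvPolynomial (Fin 4) k) = X 0 ^ 1 from (pow_one _).symm,
      X_pow_eq_monomial, X_pow_eq_monomial, monomial_mul, mul_one, phi_monomial]
    have : ∀ v : Fin 4, ((Finsupp.single 0 1 + Finsupp.single 2 i : Fin 4 →₀ ℕ)) v =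
        (Finsupp.single (0 : Fin 4) 1) v + (Finsupp.single (2 : Fin 4) i) v :=
      fun v => rfl
    rw [this 0, this 1, this 2, this 3]
    simp [Finsupp.single_apply, T]
  · show phi k (X 1 * X 2 ^ i) = _
    rw [show (X 1 : MvPolynomial (Fin 4) k) = X 1 ^ 1 from (pow_one _).symm,
      X_pow_eq_monomial, X_pow_eq_monomial, monomial_mul, mul_one, phi_monomial]
    have : ∀ v : Fin 4, ((Finsupp.single 1 1 + Finsupp.single 2 i : Fin 4 →₀ ℕ)) v =
        (Finsupp.single (1 : Fin 4) 1) v + (Finsupp.single (2 : Fin 4) i) v :=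
      fun v => rfl
    rw [this 0, this 1, this 2, this 3]
    simp [Finsupp.single_apply, T]
  · show phi k (X 0 ^ 2) = _
    rw [X_pow_eq_monomial, phi_monomial]
    simp [Finsupp.single_apply, T]

lemma basis_li : LinearIndependent k (basisFamily k) := by
  refine (@linearIndependent_iff _ k (Rring k) _ _ Algebra.toModule (basisFamily k)).mpr ?_
  intro l hl
  have hl' : (Ideal.Quotient.mkₐ k (rIdeal k)).toLinearMap
      (Finsupp.linearCombination k (rep k) l) = 0 := by
    rw [Finsupp.apply_linearCombination]
    have hcomp : (fun e => (Ideal.Quotient.mkₐ k (rIdeal k)).toLinearMap (rep k e)) =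
        basisFamily k := by
      funext e
      rcases e with ⟨i, j⟩ | i | i | _ <;> rfl
    show Finsupp.linearCombination k
      (fun e => (Ideal.Quotient.mkₐ k (rIdeal k)).toLinearMap (rep k e)) l = 0
    rw [hcomp]
    exact hl
  have hmem : Finsupp.linearCombination k (rep k) l ∈ rIdeal k := by
    have h2 := hl'
    rw [AlgHom.toLinearMap_apply, Ideal.Quotient.mkₐ_eq_mk] at h2
    exact Ideal.Quotient.eq_zero_iff_mem.mp h2
  have h0 : phi k (Finsupp.linearCombination k (rep k) l) = l := by
    rw [Finsupp.apply_linearCombination]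
    rw [Finsupp.linearCombination_apply]
    simp only [Function.comp_apply, phi_rep, Finsupp.smul_single, smul_eq_mul, mul_one]
    exact Finsupp.sum_single l
  rw [phi_ideal k hmem] at h0
  exact h0.symm

lemma basis_span : Submodule.span k (Set.range (basisFamily k)) = ⊤ := by
  have mem1 : (X 3 * X 0 : MvPolynomial (Fin 4) k) ∈ rIdeal k :=
    Ideal.subset_span (by simp)
  have mem2 : (X 0 * X 1 : MvPolynomial (Fin 4) k) ∈ rIdeal k :=
    Ideal.subset_span (by simp)
  have mem3 : (X 2 * X 0 - X 3 * X 1 : MvPolynomial (Fin 4) k) ∈ rIdeal k :=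
    Ideal.subset_span (by simp)
  have mem4 : (X 0 ^ 2 - X 1 ^ 2 : MvPolynomial (Fin 4) k) ∈ rIdeal k :=
    Ideal.subset_span (by simp)
  set M : MvPolynomial (Fin 4) k →+* Rring k :=
    (Ideal.Quotient.mk (rIdeal k) : MvPolynomial (Fin 4) k →+* Rring k) with hM
  set S : Submodule k (Rring k) := Submodule.span k (Set.range (basisFamily k)) with hS
  set x : Rring k := M (X 0) with hxdef
  set y : Rring k := M (X 1) with hydef
  set a : Rring k := M (X 2) with hadef
  set b : Rring k := M (X 3) with hbdef
  have hbx : b * x = 0 := by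
    rw [hbdef, hxdef, ← map_mul]
    exact Ideal.Quotient.eq_zero_iff_mem.mpr mem1
  have hxy : x * y = 0 := by
    rw [hxdef, hydef, ← map_mul]
    exact Ideal.Quotient.eq_zero_iff_mem.mpr mem2
  have hax : a * x = b * y := by
    have h : M (X 2 * X 0 - X 3 * X 1) = 0 := Ideal.Quotient.eq_zero_iff_mem.mpr mem3
    rw [map_sub, sub_eq_zero, map_mul, map_mul] at h
    exact h
  have hx2 : x ^ 2 = y ^ 2 := by
    have h : M (X 0 ^ 2 - X 1 ^ 2) = 0 := Ideal.Quotient.eq_zero_iff_mem.mpr mem4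
    rw [map_sub, sub_eq_zero, map_pow, map_pow] at h
    exact h
  -- basis elements as words in x, y, a, b
  have bfa : ∀ i j : ℕ, basisFamily k (Sum.inl (i, j)) = a ^ i * b ^ j := by
    intro i j
    show M (X 2 ^ i * X 3 ^ j) = a ^ i * b ^ j
    rw [map_mul, map_pow, map_pow]
  have bfx : ∀ i : ℕ, basisFamily k (Sum.inr (Sum.inl i)) = x * a ^ i := by
    intro i
    show M (X 0 * X 2 ^ i) = x * a ^ i
    rw [map_mul, map_pow]
  have bfy : ∀ i : ℕ, basisFamily k (Sum.inr (Sum.inr (Sum.inl i))) = y * a ^ i := by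
    intro i
    show M (X 1 * X 2 ^ i) = y * a ^ i
    rw [map_mul, map_pow]
  have bfq : basisFamily k (Sum.inr (Sum.inr (Sum.inr ()))) = x ^ 2 := by
    show M (X 0 ^ 2) = x ^ 2
    rw [map_pow]
  have mba : ∀ i j : ℕ, a ^ i * b ^ j ∈ S := fun i j =>
    Submodule.subset_span ⟨Sum.inl (i, j), bfa i j⟩
  have mbx : ∀ i : ℕ, x * a ^ i ∈ S := fun i =>
    Submodule.subset_span ⟨Sum.inr (Sum.inl i), bfx i⟩
  have mby : ∀ i : ℕ, y * a ^ i ∈ S := fun i =>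
    Submodule.subset_span ⟨Sum.inr (Sum.inr (Sum.inl i)), bfy i⟩
  have mbq : x ^ 2 ∈ S := Submodule.subset_span ⟨Sum.inr (Sum.inr (Sum.inr ())), bfq⟩
  -- closure of S under multiplication by the variables
  have hle : ∀ (e : Idx) (n : Fin 4), basisFamily k e * M (X n) ∈ S := by
    rintro (⟨i, j⟩ | i | i | u) n <;> fin_cases n <;> simp only [Fin.zero_eta, Fin.mk_one, Fin.reduceFinMk]
    -- e = aⁱbʲ
    · rw [bfa]
      rcases j with _ | j
      · have h : a ^ i * b ^ 0 * x = x * a ^ i := by ring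
        rw [h]; exact mbx i
      · have h : a ^ i * b ^ (j + 1) * x = 0 := by
          linear_combination (a ^ i * b ^ j) * hbx
        rw [h]; exact Submodule.zero_mem S
    · rw [bfa]
      rcases j with _ | _ | j
      · have h : a ^ i * b ^ 0 * y = y * a ^ i := by ring
        rw [h]; exact mby i
      · have h : a ^ i * b ^ 1 * y = x * a ^ (i + 1) := by
          linear_combination (-(a ^ i)) * hax
        rw [h]; exact mbx (i + 1)
      · have h : a ^ i * b ^ (j + 2) * y = 0 := by
          linear_combination (a ^ (i + 1) * b ^ j) * hbx - (a ^ i * b ^ (j + 1)) * hax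
        rw [h]; exact Submodule.zero_mem S
    · rw [bfa]
      have h : a ^ i * b ^ j * a = a ^ (i + 1) * b ^ j := by ring
      rw [h]; exact mba (i + 1) j
    · rw [bfa]
      have h : a ^ i * b ^ j * b = a ^ i * b ^ (j + 1) := by ring
      rw [h]; exact mba i (j + 1)
    -- e = xaⁱ
    · rw [bfx]
      rcases i with _ | i
      · have h : x * a ^ 0 * x = x ^ 2 := by ring
        rw [h]; exact mbq
      · have h : x * a ^ (i + 1) * x = 0 := by
          linear_combination (a ^ i * x) * hax + (a ^ i * y) * hbx
        rw [h]; exact Submodule.zero_mem S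
    · rw [bfx]
      have h : x * a ^ i * y = 0 := by linear_combination (a ^ i) * hxy
      rw [h]; exact Submodule.zero_mem S
    · rw [bfx]
      have h : x * a ^ i * a = x * a ^ (i + 1) := by ring
      rw [h]; exact mbx (i + 1)
    · rw [bfx]
      have h : x * a ^ i * b = 0 := by linear_combination (a ^ i) * hbx
      rw [h]; exact Submodule.zero_mem S
    -- e = yaⁱ
    · rw [bfy]
      have h : y * a ^ i * x = 0 := by linear_combination (a ^ i) * hxy
      rw [h]; exact Submodule.zero_mem S
    · rw [bfy]
      rcases i with _ | i
      · have h : y * a ^ 0 * y = x ^ 2 := by linear_combination -hx2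
        rw [h]; exact mbq
      · have h : y * a ^ (i + 1) * y = 0 := by
          linear_combination (a ^ i * x) * hax + (a ^ i * y) * hbx - (a ^ (i + 1)) * hx2
        rw [h]; exact Submodule.zero_mem S
    · rw [bfy]
      have h : y * a ^ i * a = y * a ^ (i + 1) := by ring
      rw [h]; exact mby (i + 1)
    · rw [bfy]
      have h : y * a ^ i * b = x * a ^ (i + 1) := by linear_combination (-(a ^ i)) * hax
      rw [h]; exact mbx (i + 1)
    -- e = x²
    · rw [bfq]
      have h : x ^ 2 * x = 0 := by linear_combination x * hx2 + y * hxy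
      rw [h]; exact Submodule.zero_mem S
    · rw [bfq]
      have h : x ^ 2 * y = 0 := by linear_combination x * hxy
      rw [h]; exact Submodule.zero_mem S
    · rw [bfq]
      have h : x ^ 2 * a = 0 := by linear_combination x * hax + y * hbx
      rw [h]; exact Submodule.zero_mem S
    · rw [bfq]
      have h : x ^ 2 * b = 0 := by linear_combination x * hbx
      rw [h]; exact Submodule.zero_mem S
  have key : ∀ (n : Fin 4) (s : Rring k), s ∈ S → s * M (X n) ∈ S := by
    intro n s hs
    rw [hS] at hs
    refine Submodule.span_induction (p := fun t _ => t * M (X n) ∈ S) ?_ ?_ ?_ ?_ hs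
    · rintro t ⟨e, rfl⟩; exact hle e n
    · show (0 : Rring k) * M (X n) ∈ S
      rw [zero_mul]; exact Submodule.zero_mem S
    · intro u v _ _ hu hv
      show (u + v) * M (X n) ∈ S
      rw [add_mul]; exact Submodule.add_mem S hu hv
    · intro c u _ hu
      show (c • u) * M (X n) ∈ S
      rw [smul_mul_assoc]; exact Submodule.smul_mem S c hu
  have hone : (1 : Rring k) ∈ S := by simpa using mba 0 0
  rw [eq_top_iff]
  rintro z -
  obtain ⟨p, rfl⟩ := Ideal.Quotient.mk_surjective z
  show M p ∈ S
  induction p using MvPolynomial.induction_on with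
  | C c =>
    have h : M (C c) = c • (1 : Rring k) := by
      rw [Algebra.smul_def, mul_one]
      rfl
    rw [h]; exact Submodule.smul_mem S c hone
  | add p q hp hq => rw [map_add]; exact Submodule.add_mem S hp hq
  | mul_X p n hp => rw [map_mul]; exact key n (M p) hp

/-- In `R = k[x,y,a,b]/(bx, xy, ax − by, x² − y²)`, the elements `aⁱbʲ` (`i, j ≥ 0`),
`xaⁱ` (`i ≥ 0`), `yaⁱ` (`i ≥ 0`) and `x²` form a `k`-vector-space basis of `R`. -/
theorem basisFamily_is_basis :
    LinearIndependent k (basisFamily k) ∧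
    Submodule.span k (Set.range (basisFamily k)) = ⊤ := by
  exact ⟨basis_li k, basis_span k⟩

end
end

section
/- Let k be a field, R' = k[x,y]/(x² − y², xy), and let M be the cokernel of the 2×2 matrix A = [[x, 0], [−y, x]] over R'. Then with B = [[y, 0], [x, y]], the complex ⋯ → R'(−3)² →A R'(−2)² →B R'(−1)² →A R'² → M → 0 is exact; i.e., M has an eventually 2-periodic minimal free resolution over R' with alternating differentials A and B. In particular, M has a linear resolution over R'. -/
open MvPolynomial

noncomputable section

variable (k : Type) [Field k]

/-- `R' = k[x,y]/(x² − y², xy)` with `x = X 0`, `y = X 1`. -/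
def Rprime := MvPolynomial (Fin 2) k ⧸
  (Ideal.span {(X 0 : MvPolynomial (Fin 2) k) ^ 2 - X 1 ^ 2, X 0 * X 1})

instance : CommRing (Rprime k) := by unfold Rprime; infer_instance

/-- The image of `x` in `R'`. -/
def xR : Rprime k := Ideal.Quotient.mk _ (X 0)
/-- The image of `y` in `R'`. -/
def yR : Rprime k := Ideal.Quotient.mk _ (X 1)

/-- The matrix `A = [[x, 0], [−y, x]]` over `R'`. -/
def matA : Matrix (Fin 2) (Fin 2) (Rprime k) := !![xR k, 0; -yR k, xR k]

/-- The matrix `B = [[y, 0], [x, y]]` over `R'`. -/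
def matB : Matrix (Fin 2) (Fin 2) (Rprime k) := !![yR k, 0; xR k, yR k]

namespace PerAux

variable {k}

/-- The defining ideal. -/
def Igen : Ideal (MvPolynomial (Fin 2) k) :=
  Ideal.span {(X 0 : MvPolynomial (Fin 2) k) ^ 2 - X 1 ^ 2, X 0 * X 1}

lemma g1_mem : ((X 0 : MvPolynomial (Fin 2) k) ^ 2 - X 1 ^ 2) ∈ (Igen : Ideal (MvPolynomial (Fin 2) k)) :=
  Ideal.subset_span (Or.inl rfl)

lemma g2_mem : ((X 0 : MvPolynomial (Fin 2) k) * X 1) ∈ (Igen : Ideal (MvPolynomial (Fin 2) k)) :=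
  Ideal.subset_span (Or.inr rfl)

/-- Multiplication-by-x matrix in the basis 1, x, y, x². -/
def MX : Matrix (Fin 4) (Fin 4) k := !![0,0,0,0; 1,0,0,0; 0,0,0,0; 0,1,0,0]
/-- Multiplication-by-y matrix. -/
def MY : Matrix (Fin 4) (Fin 4) k := !![0,0,0,0; 0,0,0,0; 1,0,0,0; 0,0,1,0]

lemma MXY : (MX : Matrix (Fin 4) (Fin 4) k) * MY = 0 := by
  ext i j
  fin_cases i <;> fin_cases j <;>
    simp [MX, MY, Matrix.mul_apply, Fin.sum_univ_four]

lemma MYX : (MY : Matrix (Fin 4) (Fin 4) k) * MX = 0 := by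
  ext i j
  fin_cases i <;> fin_cases j <;>
    simp [MX, MY, Matrix.mul_apply, Fin.sum_univ_four]

lemma MX2Y2 : (MX : Matrix (Fin 4) (Fin 4) k) * MX = MY * MY := by
  ext i j
  fin_cases i <;> fin_cases j <;>
    simp [MX, MY, Matrix.mul_apply, Fin.sum_univ_four]

lemma comm_gen : ∀ a ∈ ({MX, MY} : Set (Matrix (Fin 4) (Fin 4) k)),
    ∀ b ∈ ({MX, MY} : Set (Matrix (Fin 4) (Fin 4) k)), a * b = b * a := by
  rintro a (rfl | rfl) b (rfl | rfl)
  · rfl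
  · rw [MXY, MYX]
  · rw [MXY, MYX]
  · rfl

/-- The commutative subalgebra generated by `MX`, `MY`. -/
def Sadj : Subalgebra k (Matrix (Fin 4) (Fin 4) k) := Algebra.adjoin k {MX, MY}

instance : CommRing (Sadj : Subalgebra k (Matrix (Fin 4) (Fin 4) k)) :=
  { (Sadj : Subalgebra k (Matrix (Fin 4) (Fin 4) k)).toRing with
    mul_comm := (Algebra.adjoinCommRingOfComm k comm_gen).mul_comm }

lemma MX_mem : (MX : Matrix (Fin 4) (Fin 4) k) ∈ (Sadj : Subalgebra k (Matrix (Fin 4) (Fin 4) k)) :=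
  Algebra.subset_adjoin (Or.inl rfl)

lemma MY_mem : (MY : Matrix (Fin 4) (Fin 4) k) ∈ (Sadj : Subalgebra k (Matrix (Fin 4) (Fin 4) k)) :=
  Algebra.subset_adjoin (Or.inr rfl)

/-- The representation. -/
def θ : MvPolynomial (Fin 2) k →ₐ[k] Matrix (Fin 4) (Fin 4) k :=
  (Sadj : Subalgebra k (Matrix (Fin 4) (Fin 4) k)).val.comp
    (aeval ![⟨MX, MX_mem⟩, ⟨MY, MY_mem⟩])

lemma θ_comm (p q : MvPolynomial (Fin 2) k) : θ p * θ q = θ q * θ p := by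
  simp only [θ, AlgHom.coe_comp, Function.comp_apply, Subalgebra.coe_val,
    ← MulMemClass.coe_mul, ← map_mul, mul_comm]

lemma θ_X0 : (θ (X 0) : Matrix (Fin 4) (Fin 4) k) = MX := by simp [θ]
lemma θ_X1 : (θ (X 1) : Matrix (Fin 4) (Fin 4) k) = MY := by simp [θ]

lemma θ_vanish {p : MvPolynomial (Fin 2) k} (hp : p ∈ (Igen : Ideal (MvPolynomial (Fin 2) k))) :
    θ p = 0 := by
  rw [Igen, Ideal.mem_span_pair] at hp
  obtain ⟨a, b, hab⟩ := hp
  have h1 : θ ((X 0 : MvPolynomial (Fin 2) k) ^ 2 - X 1 ^ 2) = 0 := by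
    rw [map_sub, map_pow, map_pow, θ_X0, θ_X1, pow_two, pow_two, MX2Y2, sub_self]
  have h2 : θ ((X 0 : MvPolynomial (Fin 2) k) * X 1) = 0 := by
    rw [map_mul, θ_X0, θ_X1, MXY]
  rw [← hab, map_add, map_mul, map_mul, h1, h2, mul_zero, mul_zero, add_zero]

lemma commX (p : MvPolynomial (Fin 2) k) : Commute MX (θ p) := by
  have := θ_comm (X 0) p
  rwa [θ_X0] at this

lemma commY (p : MvPolynomial (Fin 2) k) : Commute MY (θ p) := by
  have := θ_comm (X 1) p
  rwa [θ_X1] at this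

/-- Normal form combination. -/
def combo (v : Fin 4 → k) : MvPolynomial (Fin 2) k :=
  C (v 0) + C (v 1) * X 0 + C (v 2) * X 1 + C (v 3) * X 0 ^ 2

lemma X0cube_mem : ((X 0 : MvPolynomial (Fin 2) k) ^ 3) ∈ (Igen : Ideal (MvPolynomial (Fin 2) k)) := by
  have : (X 0 : MvPolynomial (Fin 2) k) ^ 3 =
      X 0 * (X 0 ^ 2 - X 1 ^ 2) + X 1 * (X 0 * X 1) := by ring
  rw [this]
  exact Ideal.add_mem _ (Ideal.mul_mem_left _ _ g1_mem) (Ideal.mul_mem_left _ _ g2_mem)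

lemma normal (p : MvPolynomial (Fin 2) k) :
    p - combo (fun j => θ p j 0) ∈ (Igen : Ideal (MvPolynomial (Fin 2) k)) := by
  induction p using MvPolynomial.induction_on with
  | C a =>
    have : (fun j : Fin 4 => θ (C a : MvPolynomial (Fin 2) k) j 0) =
        fun j => if j = 0 then a else 0 := by
      funext j
      simp [θ, Matrix.algebraMap_matrix_apply, Algebra.algebraMap_self_apply]
    rw [this]
    simp [combo]
  | add p q hp hq =>
    have : p + q - combo (fun j => θ (p + q) j 0) =
        (p - combo (fun j => θ p j 0)) + (q - combo (fun j => θ q j 0)) := by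
      simp only [map_add, combo, Matrix.add_apply, map_add]
      ring
    rw [this]
    exact Ideal.add_mem _ hp hq
  | mul_X p i hp =>
    fin_cases i
    · -- multiply by X 0
      show p * X 0 - combo (fun j => θ (p * X 0) j 0) ∈ (Igen : Ideal (MvPolynomial (Fin 2) k))
      have hcol : ∀ j, θ (p * X 0) j 0 = ((MX * θ p : Matrix (Fin 4) (Fin 4) k)) j 0 := by
        intro j
        rw [map_mul, θ_X0, ← (commX p).eq]
      have h0 : θ (p * X 0) 0 0 = 0 := by
        rw [hcol]; simp [MX, Matrix.mul_apply, Fin.sum_univ_four]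
      have h1 : θ (p * X 0) 1 0 = θ p 0 0 := by
        rw [hcol]; simp [MX, Matrix.mul_apply, Fin.sum_univ_four]
      have h2 : θ (p * X 0) 2 0 = 0 := by
        rw [hcol]; simp [MX, Matrix.mul_apply, Fin.sum_univ_four]
      have h3 : θ (p * X 0) 3 0 = θ p 1 0 := by
        rw [hcol]; simp [MX, Matrix.mul_apply, Fin.sum_univ_four]
      have key : p * X 0 - combo (fun j => θ (p * X 0) j 0) =
          (p - combo (fun j => θ p j 0)) * X 0
          + (C (θ p 2 0) + C (θ p 3 0) * X 1) * (X 0 * X 1)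
          + (C (θ p 3 0) * X 0) * (X 0 ^ 2 - X 1 ^ 2) := by
        simp only [combo, h0, h1, h2, h3, MvPolynomial.C_0]
        ring
      rw [key]
      exact Ideal.add_mem _
        (Ideal.add_mem _ (Ideal.mul_mem_right _ _ hp) (Ideal.mul_mem_left _ _ g2_mem))
        (Ideal.mul_mem_left _ _ g1_mem)
    · -- multiply by X 1
      show p * X 1 - combo (fun j => θ (p * X 1) j 0) ∈ (Igen : Ideal (MvPolynomial (Fin 2) k))
      have hcol : ∀ j, θ (p * X 1) j 0 = ((MY * θ p : Matrix (Fin 4) (Fin 4) k)) j 0 := by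
        intro j
        rw [map_mul, θ_X1, ← (commY p).eq]
      have h0 : θ (p * X 1) 0 0 = 0 := by
        rw [hcol]; simp [MY, Matrix.mul_apply, Fin.sum_univ_four]
      have h1 : θ (p * X 1) 1 0 = 0 := by
        rw [hcol]; simp [MY, Matrix.mul_apply, Fin.sum_univ_four]
      have h2 : θ (p * X 1) 2 0 = θ p 0 0 := by
        rw [hcol]; simp [MY, Matrix.mul_apply, Fin.sum_univ_four]
      have h3 : θ (p * X 1) 3 0 = θ p 2 0 := by
        rw [hcol]; simp [MY, Matrix.mul_apply, Fin.sum_univ_four]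
      have key : p * X 1 - combo (fun j => θ (p * X 1) j 0) =
          (p - combo (fun j => θ p j 0)) * X 1
          + (C (θ p 1 0) + C (θ p 3 0) * X 0) * (X 0 * X 1)
          + (- C (θ p 2 0)) * (X 0 ^ 2 - X 1 ^ 2) := by
        simp only [combo, h0, h1, h2, h3, MvPolynomial.C_0]
        ring
      rw [key]
      exact Ideal.add_mem _
        (Ideal.add_mem _ (Ideal.mul_mem_right _ _ hp) (Ideal.mul_mem_left _ _ g2_mem))
        (Ideal.mul_mem_left _ _ g1_mem)

lemma mk_g1 : Ideal.Quotient.mk (Igen : Ideal (MvPolynomial (Fin 2) k))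
    ((X 0 : MvPolynomial (Fin 2) k) ^ 2 - X 1 ^ 2) = 0 :=
  Ideal.Quotient.eq_zero_iff_mem.mpr g1_mem

lemma hxy : xR k * yR k = 0 := by
  show Ideal.Quotient.mk (Igen : Ideal (MvPolynomial (Fin 2) k)) (X 0) *
    Ideal.Quotient.mk Igen (X 1) = 0
  refine (map_mul (Ideal.Quotient.mk Igen) _ _).symm.trans ?_
  exact Ideal.Quotient.eq_zero_iff_mem.mpr g2_mem

lemma hx2 : xR k * xR k = yR k * yR k := by
  show Ideal.Quotient.mk (Igen : Ideal (MvPolynomial (Fin 2) k)) (X 0) *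
    Ideal.Quotient.mk Igen (X 0) = Ideal.Quotient.mk Igen (X 1) * Ideal.Quotient.mk Igen (X 1)
  refine ((map_mul (Ideal.Quotient.mk Igen) _ _).symm.trans ?_).trans
    (map_mul (Ideal.Quotient.mk Igen) _ _)
  refine Ideal.Quotient.eq.mpr ?_
  have : (X 0 : MvPolynomial (Fin 2) k) * X 0 - X 1 * X 1 = X 0 ^ 2 - X 1 ^ 2 := by ring
  rw [this]
  exact g1_mem

lemma ann_x {r : Rprime k} (h : xR k * r = 0) : ∃ s : Rprime k, r = yR k * s := by
  obtain ⟨p, rfl⟩ := Ideal.Quotient.mk_surjective (I := (Igen : Ideal (MvPolynomial (Fin 2) k))) r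
  have h' : Ideal.Quotient.mk (Igen : Ideal (MvPolynomial (Fin 2) k)) (X 0 * p) = 0 := by
    rw [map_mul]; exact h
  have hmem : (X 0 : MvPolynomial (Fin 2) k) * p ∈ (Igen : Ideal (MvPolynomial (Fin 2) k)) :=
    Ideal.Quotient.eq_zero_iff_mem.mp h'
  have θ0 : (MX : Matrix (Fin 4) (Fin 4) k) * θ p = 0 := by
    have := θ_vanish hmem
    rwa [map_mul, θ_X0] at this
  have e0 : θ p 0 0 = 0 := by
    have := congrFun (congrFun θ0 1) 0
    simpa [MX, Matrix.mul_apply, Fin.sum_univ_four] using this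
  have e1 : θ p 1 0 = 0 := by
    have := congrFun (congrFun θ0 3) 0
    simpa [MX, Matrix.mul_apply, Fin.sum_univ_four] using this
  have hnf := normal (k := k) p
  have key : p - X 1 * (C (θ p 2 0) + C (θ p 3 0) * X 1) =
      (p - combo (fun j => θ p j 0)) + C (θ p 3 0) * (X 0 ^ 2 - X 1 ^ 2) := by
    simp only [combo, e0, e1, MvPolynomial.C_0]
    ring
  have hm : p - X 1 * (C (θ p 2 0) + C (θ p 3 0) * X 1) ∈
      (Igen : Ideal (MvPolynomial (Fin 2) k)) := by
    rw [key]
    exact Ideal.add_mem _ hnf (Ideal.mul_mem_left _ _ g1_mem)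
  refine ⟨Ideal.Quotient.mk Igen (C (θ p 2 0) + C (θ p 3 0) * X 1), ?_⟩
  have : Ideal.Quotient.mk (Igen : Ideal (MvPolynomial (Fin 2) k)) p =
      Ideal.Quotient.mk Igen (X 1 * (C (θ p 2 0) + C (θ p 3 0) * X 1)) :=
    Ideal.Quotient.eq.mpr hm
  rw [this, map_mul]
  rfl

lemma ann_y {r : Rprime k} (h : yR k * r = 0) : ∃ s : Rprime k, r = xR k * s := by
  obtain ⟨p, rfl⟩ := Ideal.Quotient.mk_surjective (I := (Igen : Ideal (MvPolynomial (Fin 2) k))) r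
  have h' : Ideal.Quotient.mk (Igen : Ideal (MvPolynomial (Fin 2) k)) (X 1 * p) = 0 := by
    rw [map_mul]; exact h
  have hmem : (X 1 : MvPolynomial (Fin 2) k) * p ∈ (Igen : Ideal (MvPolynomial (Fin 2) k)) :=
    Ideal.Quotient.eq_zero_iff_mem.mp h'
  have θ0 : (MY : Matrix (Fin 4) (Fin 4) k) * θ p = 0 := by
    have := θ_vanish hmem
    rwa [map_mul, θ_X1] at this
  have e0 : θ p 0 0 = 0 := by
    have := congrFun (congrFun θ0 2) 0
    simpa [MY, Matrix.mul_apply, Fin.sum_univ_four] using this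
  have e2 : θ p 2 0 = 0 := by
    have := congrFun (congrFun θ0 3) 0
    simpa [MY, Matrix.mul_apply, Fin.sum_univ_four] using this
  have hnf := normal (k := k) p
  have key : p - X 0 * (C (θ p 1 0) + C (θ p 3 0) * X 0) =
      (p - combo (fun j => θ p j 0)) := by
    simp only [combo, e0, e2, MvPolynomial.C_0]
    ring
  have hm : p - X 0 * (C (θ p 1 0) + C (θ p 3 0) * X 0) ∈
      (Igen : Ideal (MvPolynomial (Fin 2) k)) := by
    rw [key]; exact hnf
  refine ⟨Ideal.Quotient.mk Igen (C (θ p 1 0) + C (θ p 3 0) * X 0), ?_⟩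
  have : Ideal.Quotient.mk (Igen : Ideal (MvPolynomial (Fin 2) k)) p =
      Ideal.Quotient.mk Igen (X 0 * (C (θ p 1 0) + C (θ p 3 0) * X 0)) :=
    Ideal.Quotient.eq.mpr hm
  rw [this, map_mul]
  rfl

end PerAux

open PerAux

/-- Over `R' = k[x,y]/(x²−y², xy)`, the module `M = coker A` has an eventually 2-periodic
minimal (linear) free resolution `⋯ → R'² →A R'² →B R'² →A R'² → M → 0` with alternating
differentials `A` and `B`: the displayed complex is exact. -/
theorem periodic_resolution_exact :
    Function.Exact (matA k).mulVecLin (matB k).mulVecLin ∧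
    Function.Exact (matB k).mulVecLin (matA k).mulVecLin ∧
    Function.Exact (matA k).mulVecLin (LinearMap.range (matA k).mulVecLin).mkQ ∧
    Function.Surjective (LinearMap.range (matA k).mulVecLin).mkQ := by
  have hBA : matB k * matA k = 0 := by
    ext i j
    fin_cases i <;> fin_cases j <;>
      simp [matA, matB, Matrix.mul_apply, Fin.sum_univ_two] <;>
      first
        | linear_combination hxy (k := k)
        | linear_combination -hxy (k := k)
        | linear_combination hx2 (k := k)
  have hAB : matA k * matB k = 0 := by
    ext i j
    fin_cases i <;> fin_cases j <;>
      simp [matA, matB, Matrix.mul_apply, Fin.sum_univ_two] <;>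
      first
        | linear_combination hxy (k := k)
        | linear_combination -hxy (k := k)
        | linear_combination hx2 (k := k)
  refine ⟨?_, ?_, LinearMap.exact_map_mkQ_range _, Submodule.mkQ_surjective _⟩
  · intro v
    constructor
    · intro h
      have h0 : yR k * v 0 = 0 := by
        have := congrFun h 0
        simpa [matB, Matrix.mulVecLin_apply, Matrix.mulVec, dotProduct,
          Fin.sum_univ_two] using this
      have h1 : xR k * v 0 + yR k * v 1 = 0 := by
        have := congrFun h 1
        simpa [matB, Matrix.mulVecLin_apply, Matrix.mulVec, dotProduct,
          Fin.sum_univ_two] using this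
      obtain ⟨s, hs⟩ := ann_y h0
      have h2 : yR k * (v 1 + yR k * s) = 0 := by
        linear_combination h1 - xR k * hs - s * hx2 (k := k)
      obtain ⟨t, ht⟩ := ann_y h2
      refine ⟨![s, t], ?_⟩
      funext i
      fin_cases i <;>
        simp [matA, Matrix.mulVecLin_apply, Matrix.mulVec, dotProduct,
          Fin.sum_univ_two]
      · exact hs.symm
      · linear_combination -ht
    · rintro ⟨w, rfl⟩
      have : (matB k).mulVecLin ((matA k).mulVecLin w) = (matB k * matA k).mulVecLin w := by
        rw [Matrix.mulVecLin_mul]; rfl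
      rw [this, hBA, Matrix.mulVecLin_zero]
      rfl
  · intro v
    constructor
    · intro h
      have h0 : xR k * v 0 = 0 := by
        have := congrFun h 0
        simpa [matA, Matrix.mulVecLin_apply, Matrix.mulVec, dotProduct,
          Fin.sum_univ_two] using this
      have h1 : -(yR k * v 0) + xR k * v 1 = 0 := by
        have := congrFun h 1
        simpa [matA, Matrix.mulVecLin_apply, Matrix.mulVec, dotProduct,
          Fin.sum_univ_two] using this
      obtain ⟨s, hs⟩ := ann_x h0
      have h2 : xR k * (v 1 - xR k * s) = 0 := by
        linear_combination h1 + yR k * hs - s * hx2 (k := k)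
      obtain ⟨t, ht⟩ := ann_x h2
      refine ⟨![s, t], ?_⟩
      funext i
      fin_cases i <;>
        simp [matB, Matrix.mulVecLin_apply, Matrix.mulVec, dotProduct,
          Fin.sum_univ_two]
      · exact hs.symm
      · linear_combination -ht
    · rintro ⟨w, rfl⟩
      have : (matA k).mulVecLin ((matB k).mulVecLin w) = (matA k * matB k).mulVecLin w := by
        rw [Matrix.mulVecLin_mul]; rfl
      rw [this, hAB, Matrix.mulVecLin_zero]
      rfl

end
end
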